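/- Under assumptions IAD and SH, the covariance of a weight derivative with a bias derivative is E[Dw_{i,j,δ} Db_{i'}] = β(δ) M(j) Γ(i, i', 0), where Db_{i'} = Σ_{t'∈T} Dz_{i',t'}, M(j) = E[a_{j,t}] for t ∈ T, and β(δ) = |{t ∈ T : t+δ ∈ T}|, additionally assuming SUD (Γ(i,i',d)=0 for d≠0). -/

import Mathlib

open MeasureTheory ProbabilityTheory

/-- Under IAD, SH and SUD, the covariance of a weight derivative with a bias
derivative is `E[Dw i j δ * Db i'] = β(δ) · M(j) · Γ(i,i',0)`, where
`Db i' = ∑ t' in T, Dz i' t'`, `M j` is the (spatially constant) mean activation,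
and `β(δ) = |{t ∈ T : t+δ ∈ T}|`. -/
theorem kfc_weight_bias_factorization {α : Type*} [MeasurableSpace α] (μ : Measure α)
    [IsProbabilityMeasure μ]
    {J I : Type*} (T : Finset (ℤ × ℤ))
    (a : J → ℤ × ℤ → α → ℝ) (Dz : I → ℤ × ℤ → α → ℝ)
    (M : J → ℝ) (Γf : I → I → ℤ × ℤ → ℝ)
    (ha_meas : ∀ j t, Measurable (a j t)) (hDz_meas : ∀ i t, Measurable (Dz i t))
    (ha_L2 : ∀ j t, MemLp (a j t) 2 μ) (hDz_L2 : ∀ i t, MemLp (Dz i t) 2 μ)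
    -- IAD: the activations are independent of the pre-activation derivatives
    (hIAD : Indep
      (⨆ p : J × (ℤ × ℤ), MeasurableSpace.comap (a p.1 p.2) inferInstance)
      (⨆ p : I × (ℤ × ℤ), MeasurableSpace.comap (Dz p.1 p.2) inferInstance) μ)
    -- activations vanish outside the grid
    (ha_zero : ∀ j t, t ∉ T → a j t = 0)
    -- SH: first moments of activations are spatially constant
    (hM : ∀ j t, t ∈ T → (∫ ω, a j t ω ∂μ) = M j)
    -- SH for derivatives
    (hSH_Dz : ∀ i i' t t', t ∈ T → t' ∈ T →
      (∫ ω, Dz i t ω * Dz i' t' ω ∂μ) = Γf i i' (t' - t))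
    -- SUD: derivatives at distinct locations are uncorrelated
    (hSUD : ∀ i i' d, d ≠ (0 : ℤ × ℤ) → Γf i i' d = 0)
    (i i' : I) (j : J) (δ : ℤ × ℤ) :
    ∫ ω, (∑ t ∈ T, a j (t + δ) ω * Dz i t ω) * (∑ t' ∈ T, Dz i' t' ω) ∂μ
      = ((T.filter (fun t => t + δ ∈ T)).card : ℝ) * M j * Γf i i' 0 := by
  -- independence of an activation with a product of derivatives
  have hindep : ∀ (s : ℤ × ℤ) (t t' : ℤ × ℤ),
      IndepFun (a j s) (fun ω => Dz i t ω * Dz i' t' ω) μ := by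
    intro s t t'
    refine indep_of_indep_of_le_right (indep_of_indep_of_le_left hIAD
      (le_iSup (fun p : J × (ℤ × ℤ) =>
        MeasurableSpace.comap (a p.1 p.2) inferInstance) (j, s))) ?_
    apply Measurable.comap_le
    exact Measurable.mul
        (Measurable.of_comap_le (le_iSup (fun p : I × (ℤ × ℤ) =>
          MeasurableSpace.comap (Dz p.1 p.2) inferInstance) (i, t)))
        (Measurable.of_comap_le (le_iSup (fun p : I × (ℤ × ℤ) =>
          MeasurableSpace.comap (Dz p.1 p.2) inferInstance) (i', t')))
  have hDzDz_int : ∀ (t t' : ℤ × ℤ),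
      Integrable (fun ω => Dz i t ω * Dz i' t' ω) μ := by
    intro t t'
    have := ((hDz_L2 i' t').smul (r := 1) (hDz_L2 i t) (hpqr := ⟨by rw [inv_one]; exact ENNReal.inv_two_add_inv_two⟩)).integrable le_rfl
    exact (by simpa [Pi.smul_apply, smul_eq_mul, mul_comm] using this : Integrable (Dz i t * Dz i' t') μ)
  have ha_int : ∀ s, Integrable (a j s) μ := fun s => (ha_L2 j s).integrable one_le_two
  have hterm_int : ∀ (t t' : ℤ × ℤ),
      Integrable (fun ω => a j (t + δ) ω * (Dz i t ω * Dz i' t' ω)) μ := by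
    intro t t'
    exact (hindep (t + δ) t t').integrable_mul (ha_int _) (hDzDz_int t t')
  -- value of each term
  have hterm : ∀ t ∈ T, ∀ t' ∈ T,
      (∫ ω, a j (t + δ) ω * (Dz i t ω * Dz i' t' ω) ∂μ)
        = (∫ ω, a j (t + δ) ω ∂μ) * Γf i i' (t' - t) := by
    intro t ht t' ht'
    have h := (hindep (t + δ) t t').integral_mul_eq_mul_integral
      (ha_meas j _).aestronglyMeasurable
      ((hDz_meas i t).mul (hDz_meas i' t')).aestronglyMeasurable
    have heq : (∫ ω, a j (t + δ) ω * (Dz i t ω * Dz i' t' ω) ∂μ)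
        = integral μ ((a j (t + δ)) * fun ω => Dz i t ω * Dz i' t' ω) := rfl
    rw [heq, h, hSH_Dz i i' t t' ht ht']
  calc ∫ ω, (∑ t ∈ T, a j (t + δ) ω * Dz i t ω) * (∑ t' ∈ T, Dz i' t' ω) ∂μ
      = ∫ ω, ∑ t ∈ T, ∑ t' ∈ T, a j (t + δ) ω * (Dz i t ω * Dz i' t' ω) ∂μ := by
        congr 1; funext ω
        rw [Finset.sum_mul]
        exact Finset.sum_congr rfl fun t _ => by rw [Finset.mul_sum]; exact Finset.sum_congr rfl fun t' _ => mul_assoc _ _ _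
    _ = ∑ t ∈ T, ∑ t' ∈ T, ∫ ω, a j (t + δ) ω * (Dz i t ω * Dz i' t' ω) ∂μ := by
        rw [integral_finset_sum _ fun t _ =>
          integrable_finset_sum _ fun t' _ => hterm_int t t']
        exact Finset.sum_congr rfl fun t _ =>
          integral_finset_sum _ fun t' _ => hterm_int t t'
    _ = ∑ t ∈ T, (∫ ω, a j (t + δ) ω ∂μ) * Γf i i' 0 := by
        refine Finset.sum_congr rfl fun t ht => ?_
        rw [Finset.sum_congr rfl fun t' ht' => hterm t ht t' ht']
        rw [Finset.sum_eq_single t]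
        · rw [sub_self]
        · intro t' ht' hne
          rw [hSUD i i' _ (sub_ne_zero.mpr hne), mul_zero]
        · exact fun h => absurd ht h
    _ = ((T.filter (fun t => t + δ ∈ T)).card : ℝ) * M j * Γf i i' 0 := by
        have hval : ∀ t ∈ T, (∫ ω, a j (t + δ) ω ∂μ) * Γf i i' 0
            = if t + δ ∈ T then M j * Γf i i' 0 else 0 := by
          intro t ht
          by_cases h : t + δ ∈ T
          · rw [if_pos h, hM j _ h]
          · rw [if_neg h, ha_zero j _ h]; simp
        rw [Finset.sum_congr rfl hval, ← Finset.sum_filter, Finset.sum_const,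
          nsmul_eq_mul]
        ring
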